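/- Directional limit of the measurement-angle parameter at the boundary point: for every real number ϕ with cos ϕ ≠ 0, the function r ↦ cot(r·cos ϕ) · sin(r·sin ϕ) tends to tan ϕ as r → 0 along nonzero values of r. -/

import Mathlib

open Filter Topology

lemma sin_mul_div_tendsto (a : ℝ) :
    Tendsto (fun r : ℝ => Real.sin (r * a) / r) (𝓝[≠] (0 : ℝ)) (𝓝 a) := by
  have hd : HasDerivAt (fun r : ℝ => Real.sin (r * a)) a 0 := by
    have := (Real.hasDerivAt_sin (0 * a)).comp 0 (hasDerivAt_mul_const a)
    simpa [Function.comp_def] using this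
  have := hasDerivAt_iff_tendsto_slope.mp hd
  refine this.congr ?_
  intro r
  simp [slope_def_field, div_eq_mul_inv, mul_comm]

theorem cot_mul_sin_directional_limit (ϕ : ℝ) (h : Real.cos ϕ ≠ 0) :
    Tendsto (fun r : ℝ => Real.cot (r * Real.cos ϕ) * Real.sin (r * Real.sin ϕ))
      (𝓝[≠] (0 : ℝ)) (𝓝 (Real.tan ϕ)) := by
  have hA := sin_mul_div_tendsto (Real.sin ϕ)
  have hB := sin_mul_div_tendsto (Real.cos ϕ)
  have hC : Tendsto (fun r : ℝ => Real.cos (r * Real.cos ϕ)) (𝓝[≠] (0:ℝ)) (𝓝 1) := by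
    have : Tendsto (fun r : ℝ => Real.cos (r * Real.cos ϕ)) (𝓝 (0:ℝ)) (𝓝 1) := by
      have : Continuous fun r : ℝ => Real.cos (r * Real.cos ϕ) := by continuity
      simpa using this.tendsto 0
    exact this.mono_left nhdsWithin_le_nhds
  have hmain : Tendsto (fun r : ℝ =>
      Real.cos (r * Real.cos ϕ) * ((Real.sin (r * Real.sin ϕ) / r) / (Real.sin (r * Real.cos ϕ) / r)))
      (𝓝[≠] (0:ℝ)) (𝓝 (Real.tan ϕ)) := by
    have := hC.mul (hA.div hB h)
    simpa [Real.tan_eq_sin_div_cos] using this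
  refine hmain.congr' ?_
  -- eventually sin (r * cos ϕ) ≠ 0 and r ≠ 0
  have hsmall : ∀ᶠ r in 𝓝[≠] (0:ℝ), |r * Real.cos ϕ| < Real.pi := by
    have : Tendsto (fun r : ℝ => |r * Real.cos ϕ|) (𝓝[≠] (0:ℝ)) (𝓝 0) := by
      have cont : Continuous fun r : ℝ => |r * Real.cos ϕ| := by continuity
      have := cont.tendsto 0
      simpa using this.mono_left nhdsWithin_le_nhds
    exact this.eventually_lt_const Real.pi_pos
  have hne : ∀ᶠ r in 𝓝[≠] (0:ℝ), r ≠ 0 := eventually_mem_nhdsWithin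
  filter_upwards [hsmall, hne] with r hr hr0
  have hrc : r * Real.cos ϕ ≠ 0 := mul_ne_zero hr0 h
  have hsin : Real.sin (r * Real.cos ϕ) ≠ 0 := by
    intro hs
    rcases Real.sin_eq_zero_iff.mp hs with ⟨n, hn⟩
    rcases lt_trichotomy n 0 with hn0 | hn0 | hn0
    · have : (n : ℝ) ≤ -1 := by exact_mod_cast (by omega : n ≤ -1)
      nlinarith [Real.pi_pos, abs_lt.mp hr]
    · exact hrc (by rw [← hn, hn0]; simp)
    · have : (1 : ℝ) ≤ (n : ℝ) := by exact_mod_cast hn0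
      nlinarith [Real.pi_pos, abs_lt.mp hr]
  rw [Real.cot_eq_cos_div_sin]
  field_simp
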